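/- Let D ≥ 1 and n ≥ D, let 𝒢 be a set indexing a family of symmetric measurable kernels ℓ̃_g: (ℝ^D)^D → [0, B_ℓ], and let S₁, …, S_n be i.i.d. random vectors in ℝ^D. For each g let V(g) = n^{−D} Σ_{(i₁,…,i_D) ∈ [n]^D} ℓ̃_g(S_{i₁},…,S_{i_D}) be the V-statistic and U_D(g) = C(n,D)^{−1} Σ_{1≤i₁<⋯<i_D≤n} ℓ̃_g(S_{i₁},…,S_{i_D}) the degree-D U-statistic. Then, with w_j = n^{−D} |𝔊_j^D| C(n,j), sup_{g ∈ 𝒢} |V(g) − E V(g)| ≤ w_D · sup_{g ∈ 𝒢} |U_D(g) − E U_D(g)| + 2 B_ℓ Σ_{j=1}^{D−1} w_j. -/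

import Mathlib

open MeasureTheory

/-- The set of strictly increasing `j`-tuples of indices in `Fin n`,
representing `j`-element combinations `1 ≤ i₁ < ⋯ < i_j ≤ n` without replacement. -/
noncomputable def monoTuples (j n : ℕ) : Finset (Fin j → Fin n) := by
  classical exact Finset.univ.filter fun i => StrictMono i

section Aux
open Finset Function

lemma cardSurjSelf (D : ℕ) :
    Fintype.card {τ : Fin D → Fin D // Function.Surjective τ} = D.factorial := by
  have e : {τ : Fin D → Fin D // Function.Surjective τ} ≃ Equiv.Perm (Fin D) :=
    { toFun := fun τ => Equiv.ofBijective τ.1 ⟨Finite.injective_iff_surjective.mpr τ.2, τ.2⟩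
      invFun := fun e => ⟨e, e.surjective⟩
      left_inv := fun τ => Subtype.ext rfl
      right_inv := fun e => Equiv.ext fun x => rfl }
  rw [Fintype.card_congr e, Fintype.card_perm, Fintype.card_fin]

lemma cardImageEq (D n j : ℕ) [DecidablePred fun f : Fin D → Fin n => (Finset.univ.image f).card = j] :
    ((Finset.univ : Finset (Fin D → Fin n)).filter
        fun f => (Finset.univ.image f).card = j).card
      = n.choose j * Fintype.card {τ : Fin D → Fin j // Function.Surjective τ} := by
  classical
  rw [Finset.card_eq_sum_card_fiberwise
    (f := fun f : Fin D → Fin n => Finset.univ.image f)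
    (t := Finset.powersetCard j Finset.univ)
    (by intro f hf
        rw [Finset.mem_coe, Finset.mem_powersetCard]
        exact ⟨Finset.subset_univ _, (Finset.mem_filter.mp hf).2⟩)]
  have hfib : ∀ s ∈ Finset.powersetCard j (Finset.univ : Finset (Fin n)),
      (((Finset.univ : Finset (Fin D → Fin n)).filter
        fun f => (Finset.univ.image f).card = j).filter
          fun f => Finset.univ.image f = s).card
        = Fintype.card {τ : Fin D → Fin j // Function.Surjective τ} := by
    intro s hs
    obtain ⟨-, hcard⟩ := Finset.mem_powersetCard.mp hs
    have hset : (((Finset.univ : Finset (Fin D → Fin n)).filter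
        fun f => (Finset.univ.image f).card = j).filter
          fun f => Finset.univ.image f = s)
        = (Finset.univ : Finset (Fin D → Fin n)).filter
            fun f => Finset.univ.image f = s := by
      rw [Finset.filter_filter]
      apply Finset.filter_congr
      intro f _
      constructor
      · exact fun h => h.2
      · exact fun h => ⟨by rw [h, hcard], h⟩
    rw [hset, ← Fintype.card_subtype]
    apply Fintype.card_congr
    refine
      { toFun := fun f => ⟨fun a => (s.orderIsoOfFin hcard).symm
          ⟨f.1 a, (Finset.ext_iff.mp f.2 _).mp (Finset.mem_image_of_mem _ (Finset.mem_univ a))⟩, ?_⟩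
        invFun := fun τ => ⟨fun a => ((s.orderIsoOfFin hcard) (τ.1 a) : Fin n), ?_⟩
        left_inv := ?_
        right_inv := ?_ }
    · intro b
      have hb : ((s.orderIsoOfFin hcard) b : Fin n) ∈ Finset.univ.image f.1 := by
        rw [f.2]; exact ((s.orderIsoOfFin hcard) b).2
      obtain ⟨a, -, ha⟩ := Finset.mem_image.mp hb
      refine ⟨a, ?_⟩
      beta_reduce
      rw [OrderIso.symm_apply_eq]
      exact Subtype.ext ha
    · apply Finset.Subset.antisymm
      · intro x hx
        obtain ⟨a, -, ha⟩ := Finset.mem_image.mp hx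
        rw [← ha]; exact ((s.orderIsoOfFin hcard) (τ.1 a)).2
      · intro x hx
        obtain ⟨a, ha⟩ := τ.2 ((s.orderIsoOfFin hcard).symm ⟨x, hx⟩)
        refine Finset.mem_image.mpr ⟨a, Finset.mem_univ a, ?_⟩
        rw [ha]
        exact congrArg Subtype.val ((s.orderIsoOfFin hcard).apply_symm_apply ⟨x, hx⟩)
    · intro f
      apply Subtype.ext; funext a
      exact congrArg Subtype.val ((s.orderIsoOfFin hcard).apply_symm_apply _)
    · intro τ
      apply Subtype.ext; funext a
      beta_reduce
      rw [OrderIso.symm_apply_eq]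
  rw [Finset.sum_congr rfl hfib, Finset.sum_const, Finset.card_powersetCard,
    Finset.card_univ, Fintype.card_fin, smul_eq_mul]

lemma sumInj (D n : ℕ) (F : (Fin D → Fin n) → ℝ)
    (hF : ∀ f (π : Equiv.Perm (Fin D)), F (f ∘ π) = F f) :
    ∑ f ∈ Finset.univ.filter (fun f : Fin D → Fin n => Function.Injective f), F f
      = D.factorial * ∑ m ∈ monoTuples D n, F m := by
  classical
  have hDcard : ∀ f : Fin D → Fin n, Function.Injective f →
      (Finset.univ.image f).card = D := by
    intro f hf
    rw [Finset.card_image_of_injective _ hf, Finset.card_univ, Fintype.card_fin]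
  -- sort and permutation of an injective tuple
  set sort : (Fin D → Fin n) → (Fin D → Fin n) := fun f =>
    if h : Function.Injective f then
      fun a => (Finset.univ.image f).orderEmbOfFin (hDcard f h) a
    else f with hsort
  have key : ∀ f : Fin D → Fin n, Function.Injective f →
      ∃ π : Equiv.Perm (Fin D), f = sort f ∘ π := by
    intro f hf
    have hinj2 : Function.Injective (fun a =>
        ((Finset.univ.image f).orderIsoOfFin (hDcard f hf)).symm
          ⟨f a, Finset.mem_image_of_mem _ (Finset.mem_univ a)⟩) := by
      intro a b hab
      have := congrArg (fun x => (((Finset.univ.image f).orderIsoOfFin (hDcard f hf)) x : Fin n)) hab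
      simp only [OrderIso.apply_symm_apply] at this
      exact hf this
    refine ⟨Equiv.ofBijective _ (Finite.injective_iff_bijective.mp hinj2), ?_⟩
    funext a
    simp only [hsort, dif_pos hf, Function.comp_apply, Equiv.ofBijective_apply]
    exact (congrArg Subtype.val
      (((Finset.univ.image f).orderIsoOfFin (hDcard f hf)).apply_symm_apply
        ⟨f a, Finset.mem_image_of_mem _ (Finset.mem_univ a)⟩)).symm
  have hmono_sort : ∀ f : Fin D → Fin n, Function.Injective f → StrictMono (sort f) := by
    intro f hf
    simpa only [hsort, dif_pos hf] using ((Finset.univ.image f).orderEmbOfFin (hDcard f hf)).strictMono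
  set permOf : (Fin D → Fin n) → Equiv.Perm (Fin D) := fun f =>
    if h : Function.Injective f then Classical.choose (key f h) else 1 with hperm
  have hspec : ∀ f : Fin D → Fin n, Function.Injective f → f = sort f ∘ permOf f := by
    intro f hf
    simpa only [hperm, dif_pos hf] using Classical.choose_spec (key f hf)
  have hsum : ∑ f ∈ Finset.univ.filter (fun f : Fin D → Fin n => Function.Injective f), F f
      = ∑ p ∈ (monoTuples D n) ×ˢ (Finset.univ : Finset (Equiv.Perm (Fin D))),
          F (p.1 ∘ p.2) := by
    refine Finset.sum_nbij' (i := fun f => (sort f, permOf f)) (j := fun p => p.1 ∘ ⇑p.2)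
      ?_ ?_ ?_ ?_ ?_
    · intro f hf
      have hfi : Function.Injective f := (Finset.mem_filter.mp hf).2
      rw [Finset.mem_product]
      refine ⟨?_, Finset.mem_univ _⟩
      rw [monoTuples]
      exact Finset.mem_filter.mpr ⟨Finset.mem_univ _, hmono_sort f hfi⟩
    · intro p hp
      rw [Finset.mem_product, monoTuples] at hp
      have hm : StrictMono p.1 := (Finset.mem_filter.mp hp.1).2
      exact Finset.mem_filter.mpr ⟨Finset.mem_univ _,
        hm.injective.comp p.2.injective⟩
    · intro f hf
      exact (hspec f (Finset.mem_filter.mp hf).2).symm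
    · intro p hp
      rw [Finset.mem_product, monoTuples] at hp
      have hm : StrictMono p.1 := (Finset.mem_filter.mp hp.1).2
      obtain ⟨m, π⟩ := p
      simp only at hm ⊢
      have hinj : Function.Injective (m ∘ ⇑π) := hm.injective.comp π.injective
      have hsortEq : sort (m ∘ ⇑π) = m := by
        have himg : ∀ x, m x ∈ Finset.univ.image (m ∘ ⇑π) := by
          intro x
          refine Finset.mem_image.mpr ⟨π.symm x, Finset.mem_univ _, ?_⟩
          simp
        have := Finset.orderEmbOfFin_unique (hDcard _ hinj) himg hm
        funext a
        rw [hsort]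
        simp only [dif_pos hinj]
        exact (congrFun this a).symm
      have hπ : permOf (m ∘ ⇑π) = π := by
        have h1 := hspec (m ∘ ⇑π) hinj
        rw [hsortEq] at h1
        apply Equiv.ext
        intro a
        exact hm.injective (congrFun h1.symm a)
      rw [Prod.mk.injEq]
      exact ⟨hsortEq, hπ⟩
    · intro f hf
      have hfi : Function.Injective f := (Finset.mem_filter.mp hf).2
      conv_lhs => rw [hspec f hfi]
  rw [hsum, Finset.sum_product]
  have : ∀ m ∈ monoTuples D n, ∑ π : Equiv.Perm (Fin D), F (m ∘ ⇑π)
      = D.factorial * F m := by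
    intro m _
    rw [Finset.sum_congr rfl fun π _ => hF m π, Finset.sum_const, Finset.card_univ,
      Fintype.card_perm, Fintype.card_fin, nsmul_eq_mul]
  rw [Finset.sum_congr rfl this, ← Finset.mul_sum]

end Aux

lemma cardNonInj (D n : ℕ) (hD : 1 ≤ D)
    [DecidablePred fun f : Fin D → Fin n => ¬ Function.Injective f] :
    ((Finset.univ : Finset (Fin D → Fin n)).filter fun f => ¬ Function.Injective f).card
      = ∑ j ∈ Finset.Icc 1 (D - 1),
          n.choose j * Fintype.card {τ : Fin D → Fin j // Function.Surjective τ} := by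
  classical
  have hninj : ∀ f : Fin D → Fin n, ¬ Function.Injective f →
      (Finset.univ.image f).card ∈ Finset.Icc 1 (D - 1) := by
    intro f hf
    rw [Finset.mem_Icc]
    constructor
    · rw [Nat.one_le_iff_ne_zero, ← Nat.pos_iff_ne_zero, Finset.card_pos]
      have : Nonempty (Fin D) := ⟨⟨0, hD⟩⟩
      exact Finset.univ_nonempty.image f
    · have hle : (Finset.univ.image f).card ≤ D := by
        calc (Finset.univ.image f).card ≤ (Finset.univ : Finset (Fin D)).card :=
          Finset.card_image_le
        _ = D := by rw [Finset.card_univ, Fintype.card_fin]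
      have hne : (Finset.univ.image f).card ≠ D := by
        intro h
        have hio : Set.InjOn f (Finset.univ : Finset (Fin D)) :=
          Finset.injOn_of_card_image_eq (by rw [h, Finset.card_univ, Fintype.card_fin])
        rw [Finset.coe_univ] at hio
        exact hf (Set.injOn_univ.mp hio)
      exact Nat.le_sub_one_of_lt (lt_of_le_of_ne hle hne)
  rw [Finset.card_eq_sum_card_fiberwise
    (f := fun f : Fin D → Fin n => (Finset.univ.image f).card)
    (t := Finset.Icc 1 (D - 1))
    (fun f hf => hninj f (Finset.mem_filter.mp hf).2)]
  apply Finset.sum_congr rfl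
  intro j hj
  rw [Finset.filter_filter]
  have hset : ((Finset.univ : Finset (Fin D → Fin n)).filter
      fun f => ¬ Function.Injective f ∧ (Finset.univ.image f).card = j)
      = (Finset.univ : Finset (Fin D → Fin n)).filter
          fun f => (Finset.univ.image f).card = j := by
    apply Finset.filter_congr
    intro f _
    constructor
    · exact fun h => h.2
    · intro h
      refine ⟨fun hinj => ?_, h⟩
      have : (Finset.univ.image f).card = D := by
        rw [Finset.card_image_of_injective _ hinj, Finset.card_univ, Fintype.card_fin]
      rw [this] at h
      obtain ⟨-, h2⟩ := Finset.mem_Icc.mp hj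
      omega
  rw [hset, cardImageEq]


/-- For a family of symmetric kernels bounded in `[0, B_ℓ]`, the uniform deviation of the
V-statistic is bounded by `w_D` times the uniform deviation of the degree-`D` U-statistic
plus `2 B_ℓ Σ_{j=1}^{D-1} w_j`, where `w_j = n^{-D} |𝔊_j^D| C(n,j)`. -/
theorem stmt8 (D n : ℕ) (hD : 1 ≤ D) (hn : D ≤ n)
    {G : Type*} [Nonempty G]
    (Bl : ℝ) (ℓt : G → (Fin D → (Fin D → ℝ)) → ℝ)
    (hmeas : ∀ g, Measurable (ℓt g))
    (hbdd : ∀ g t, ℓt g t ∈ Set.Icc (0 : ℝ) Bl)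
    (hsym : ∀ (g : G) (t : Fin D → (Fin D → ℝ)) (π : Equiv.Perm (Fin D)),
      ℓt g (t ∘ π) = ℓt g t)
    (q : Measure (Fin D → ℝ)) [IsProbabilityMeasure q]
    (V U : G → (Fin n → Fin D → ℝ) → ℝ)
    (hV : ∀ g S, V g S = ((n : ℝ) ^ D)⁻¹ *
      ∑ i : Fin D → Fin n, ℓt g fun a => S (i a))
    (hU : ∀ g S, U g S = ((n.choose D : ℕ) : ℝ)⁻¹ *
      ∑ i ∈ monoTuples D n, ℓt g fun a => S (i a))
    (w : ℕ → ℝ)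
    (hw : ∀ j : ℕ, w j = ((n : ℝ) ^ D)⁻¹ *
      (Fintype.card {τ : Fin D → Fin j // Function.Surjective τ} : ℝ) * (n.choose j : ℝ))
    (S : Fin n → Fin D → ℝ) :
    (⨆ g : G, |V g S - ∫ S', V g S' ∂(Measure.pi fun _ : Fin n => q)|) ≤
      w D * (⨆ g : G, |U g S - ∫ S', U g S' ∂(Measure.pi fun _ : Fin n => q)|) +
        2 * Bl * ∑ j ∈ Finset.Icc 1 (D - 1), w j := by
  classical
  set μ : Measure (Fin n → Fin D → ℝ) := Measure.pi fun _ : Fin n => q with hμdef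
  have hBl : 0 ≤ Bl := by
    obtain ⟨g0⟩ := (inferInstance : Nonempty G)
    exact le_trans (hbdd g0 (fun _ _ => 0)).1 (hbdd g0 (fun _ _ => 0)).2
  have habs : ∀ g t, |ℓt g t| ≤ Bl := fun g t => by
    rw [abs_of_nonneg (hbdd g t).1]; exact (hbdd g t).2
  have hchoose : (0 : ℝ) < ((n.choose D : ℕ) : ℝ) := by
    exact_mod_cast Nat.choose_pos hn
  -- the remainder
  set R : G → (Fin n → Fin D → ℝ) → ℝ := fun g S' => ((n : ℝ) ^ D)⁻¹ *
    ∑ i ∈ Finset.univ.filter (fun i : Fin D → Fin n => ¬ Function.Injective i),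
      ℓt g fun a => S' (i a) with hRdef
  -- pointwise decomposition
  have hVdec : ∀ g S', V g S' = w D * U g S' + R g S' := by
    intro g S'
    rw [hV, hU, hw D, cardSurjSelf, hRdef]
    rw [← Finset.sum_filter_add_sum_filter_not Finset.univ
      (fun i : Fin D → Fin n => Function.Injective i)
      (fun i => ℓt g fun a => S' (i a))]
    rw [sumInj D n (fun i => ℓt g fun a => S' (i a))
      (fun f π => hsym g (fun a => S' (f a)) π)]
    rw [mul_add]
    congr 1
    rw [mul_comm (((n : ℝ) ^ D)⁻¹ * _) _, ← mul_assoc]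
    rw [mul_mul_mul_comm, mul_inv_cancel₀ (ne_of_gt hchoose), one_mul]
  -- integrability
  have hterm_meas : ∀ g (i : Fin D → Fin n),
      Measurable (fun S' : Fin n → Fin D → ℝ => ℓt g fun a => S' (i a)) :=
    fun g i => (hmeas g).comp (measurable_pi_lambda _ fun a => measurable_pi_apply (i a))
  have hterm_int : ∀ g (i : Fin D → Fin n),
      Integrable (fun S' : Fin n → Fin D → ℝ => ℓt g fun a => S' (i a)) μ := fun g i =>
    (integrable_const Bl).mono' (hterm_meas g i).aestronglyMeasurable
      (ae_of_all _ fun S' => by rw [Real.norm_eq_abs]; exact habs g _)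
  have hUint : ∀ g, Integrable (U g) μ := by
    intro g
    rw [show U g = fun S' => ((n.choose D : ℕ) : ℝ)⁻¹ *
      ∑ i ∈ monoTuples D n, ℓt g fun a => S' (i a) from funext (hU g)]
    exact (integrable_finset_sum _ fun i _ => hterm_int g i).const_mul _
  have hRint : ∀ g, Integrable (R g) μ := by
    intro g
    rw [hRdef]
    exact (integrable_finset_sum _ fun i _ => hterm_int g i).const_mul _
  -- integral decomposition
  have hVint : ∀ g, ∫ S', V g S' ∂μ = w D * ∫ S', U g S' ∂μ + ∫ S', R g S' ∂μ := by
    intro g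
    rw [show (fun S' => V g S') = fun S' => w D * U g S' + R g S' from
      funext fun S' => hVdec g S']
    rw [integral_add ((hUint g).const_mul _) (hRint g), integral_const_mul]
  -- bound for R
  set cnt : ℝ := ((Finset.univ.filter
    (fun i : Fin D → Fin n => ¬ Function.Injective i)).card : ℝ) with hcntdef
  set M : ℝ := ((n : ℝ) ^ D)⁻¹ * (cnt * Bl) with hMdef
  have hninv : (0 : ℝ) ≤ ((n : ℝ) ^ D)⁻¹ := by positivity
  have hR0 : ∀ g S', 0 ≤ R g S' :=
    fun g S' => mul_nonneg hninv (Finset.sum_nonneg fun i _ => (hbdd g _).1)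
  have hRle : ∀ g S', R g S' ≤ M := by
    intro g S'
    rw [hRdef, hMdef]
    apply mul_le_mul_of_nonneg_left _ hninv
    rw [hcntdef]
    calc ∑ i ∈ Finset.univ.filter (fun i : Fin D → Fin n => ¬ Function.Injective i),
          ℓt g (fun a => S' (i a))
        ≤ (Finset.univ.filter (fun i : Fin D → Fin n => ¬ Function.Injective i)).card • Bl :=
          Finset.sum_le_card_nsmul _ _ Bl fun i _ => (hbdd g _).2
      _ = _ := by rw [nsmul_eq_mul]
  have hRint0 : ∀ g, 0 ≤ ∫ S', R g S' ∂μ := fun g => integral_nonneg (hR0 g)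
  have hRintle : ∀ g, ∫ S', R g S' ∂μ ≤ M := by
    intro g
    calc ∫ S', R g S' ∂μ ≤ ∫ _S', M ∂μ :=
        integral_mono (hRint g) (integrable_const M) (hRle g)
      _ = M := by rw [integral_const, probReal_univ, one_smul]
  have hRdev : ∀ g, |R g S - ∫ S', R g S' ∂μ| ≤ M := by
    intro g
    have h1 := hR0 g S
    have h2 := hRle g S
    have h3 := hRint0 g
    have h4 := hRintle g
    rw [abs_le]
    constructor <;> linarith
  -- M equals Bl * ∑ w j
  have hM : M = Bl * ∑ j ∈ Finset.Icc 1 (D - 1), w j := by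
    have hcnt : cnt = ∑ j ∈ Finset.Icc 1 (D - 1), (n.choose j : ℝ) *
        (Fintype.card {τ : Fin D → Fin j // Function.Surjective τ} : ℝ) := by
      rw [hcntdef, cardNonInj D n hD]
      push_cast
      rfl
    rw [hMdef, hcnt, Finset.sum_mul, Finset.mul_sum, Finset.mul_sum]
    apply Finset.sum_congr rfl
    intro j _
    rw [hw j]
    ring
  have hM0 : 0 ≤ M := by
    rw [hMdef]
    have : (0:ℝ) ≤ cnt := by rw [hcntdef]; positivity
    positivity
  -- uniform bound for the U-deviations
  set K : ℝ := ((n.choose D : ℕ) : ℝ)⁻¹ * (((monoTuples D n).card : ℝ) * Bl) with hKdef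
  have hUbd : ∀ g S', |U g S'| ≤ K := by
    intro g S'
    rw [hU, hKdef, abs_mul, abs_of_nonneg (le_of_lt (inv_pos.mpr hchoose))]
    apply mul_le_mul_of_nonneg_left _ (le_of_lt (inv_pos.mpr hchoose))
    calc |∑ i ∈ monoTuples D n, ℓt g fun a => S' (i a)|
        ≤ ∑ i ∈ monoTuples D n, |ℓt g fun a => S' (i a)| := Finset.abs_sum_le_sum_abs _ _
      _ ≤ ∑ _i ∈ monoTuples D n, Bl := Finset.sum_le_sum fun i _ => habs g _
      _ = ((monoTuples D n).card : ℝ) * Bl := by rw [Finset.sum_const, nsmul_eq_mul]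
  have hUintbd : ∀ g, |∫ S', U g S' ∂μ| ≤ K := by
    intro g
    have := norm_integral_le_of_norm_le_const (μ := μ) (f := U g) (C := K)
      (ae_of_all _ fun S' => by rw [Real.norm_eq_abs]; exact hUbd g S')
    rwa [Real.norm_eq_abs, probReal_univ, mul_one] at this
  have hBdd : BddAbove (Set.range fun g => |U g S - ∫ S', U g S' ∂μ|) := by
    refine ⟨K + K, ?_⟩
    rintro x ⟨g, rfl⟩
    calc |U g S - ∫ S', U g S' ∂μ| ≤ |U g S| + |∫ S', U g S' ∂μ| := abs_sub _ _
      _ ≤ K + K := add_le_add (hUbd g S) (hUintbd g)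
  have hwD0 : 0 ≤ w D := by
    rw [hw D]
    positivity
  have hsum0 : 0 ≤ ∑ j ∈ Finset.Icc 1 (D - 1), w j := by
    apply Finset.sum_nonneg
    intro j _
    rw [hw j]; positivity
  -- conclusion
  apply ciSup_le
  intro g
  have h1 : V g S - ∫ S', V g S' ∂μ =
      w D * (U g S - ∫ S', U g S' ∂μ) + (R g S - ∫ S', R g S' ∂μ) := by
    rw [hVdec g S, hVint g]; ring
  rw [h1]
  calc |w D * (U g S - ∫ S', U g S' ∂μ) + (R g S - ∫ S', R g S' ∂μ)|
      ≤ |w D * (U g S - ∫ S', U g S' ∂μ)| + |R g S - ∫ S', R g S' ∂μ| := abs_add_le _ _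
    _ = w D * |U g S - ∫ S', U g S' ∂μ| + |R g S - ∫ S', R g S' ∂μ| := by
        rw [abs_mul, abs_of_nonneg hwD0]
    _ ≤ w D * (⨆ g : G, |U g S - ∫ S', U g S' ∂μ|) +
        2 * Bl * ∑ j ∈ Finset.Icc 1 (D - 1), w j := by
        apply add_le_add
        · exact mul_le_mul_of_nonneg_left (le_ciSup hBdd g) hwD0
        · refine (hRdev g).trans ?_
          have : M = Bl * ∑ j ∈ Finset.Icc 1 (D - 1), w j := hM
          nlinarith [hM0]
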